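/- Let P be the directed graph on vertex set {0,1} with edges {(0,0), (0,1), (1,0)}, and let G be the digraph on {0,1} with the single edge (0,1). Then ω_s(G^n, P)—the largest antichain (under coordinatewise domination) among binary strings of length n with no two consecutive 1's—satisfies limsup_n (1/n) log₂ ω_s(G^n, P) = log₂((1+√5)/2). -/

import Mathlib

open Filter Topology Asymptotics

/-- Binary strings of length `n` with no two consecutive 1's (vertex sequences of the
topological Markov type `P` with edges `{(0,0), (0,1), (1,0)}`). -/
def NoConsecOnes (n : ℕ) (x : List Bool) : Prop :=
  x.length = n ∧ ∀ i, i + 1 < n → ¬ (x.getD i false = true ∧ x.getD (i+1) false = true)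

/-- `ω_s(Gⁿ, P)`: the largest symmetric clique of `Gⁿ` (for the digraph `G` on `{0,1}`
with single edge `(0,1)`) induced on strings with no two consecutive 1's, i.e. the largest
family of such strings which is an antichain under coordinatewise domination. -/
noncomputable def omegaS (n : ℕ) : ℕ :=
  sSup {k : ℕ | ∃ B : Set (List Bool),
    (∀ x ∈ B, NoConsecOnes n x) ∧
    (∀ x ∈ B, ∀ y ∈ B, x ≠ y →
      (∃ i, i < n ∧ x.getD i false = false ∧ y.getD i false = true) ∧
      (∃ j, j < n ∧ x.getD j false = true ∧ y.getD j false = false)) ∧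
    B.ncard = k}


/-- Finset of strings of length `n` with no two consecutive ones. -/
def SS : ℕ → Finset (List Bool)
  | 0 => {[]}
  | 1 => {[false], [true]}
  | (n+2) => ((SS (n+1)).image (List.cons false)) ∪
      ((SS n).image (fun l => true :: false :: l))

lemma SS_card : ∀ n, (SS n).card = Nat.fib (n+2) := by
  have key : ∀ n, (SS n).card = Nat.fib (n+2) ∧ (SS (n+1)).card = Nat.fib (n+3) := by
    intro n
    induction n with
    | zero => constructor <;> decide
    | succ n ih =>
      refine ⟨ih.2, ?_⟩
      show ((SS (n+1)).image (List.cons false) ∪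
        ((SS n).image (fun l => true :: false :: l))).card = _
      rw [Finset.card_union_of_disjoint, Finset.card_image_of_injective,
        Finset.card_image_of_injective, ih.1, ih.2]
      · show Nat.fib (n+3) + Nat.fib (n+2) = Nat.fib (n+4)
        have h4 : Nat.fib (n+4) = Nat.fib (n+2) + Nat.fib (n+3) := Nat.fib_add_two
        omega
      · intro a b h; simpa using h
      · intro a b h; simpa using h
      · rw [Finset.disjoint_left]
        intro a ha hb
        simp only [Finset.mem_image] at ha hb
        obtain ⟨u, -, rfl⟩ := ha
        obtain ⟨v, -, hv⟩ := hb
        simp at hv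
  exact fun n => (key n).1

abbrev NotBoth (a b : Bool) : Prop := ¬ (a = true ∧ b = true)

lemma noConsecOnes_iff (n : ℕ) (x : List Bool) :
    NoConsecOnes n x ↔ x.length = n ∧ x.Chain' NotBoth := by
  constructor
  · rintro ⟨hl, h⟩
    refine ⟨hl, List.isChain_iff_getElem.2 fun i hi => ?_⟩
    have h1 : i < x.length := by omega
    have h2 : i + 1 < x.length := by omega
    have := h i (by omega)
    rwa [List.getD_eq_getElem _ _ h1, List.getD_eq_getElem _ _ h2] at this
  · rintro ⟨hl, h⟩
    refine ⟨hl, fun i hi => ?_⟩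
    have h1 : i < x.length := by omega
    have h2 : i + 1 < x.length := by omega
    rw [List.getD_eq_getElem _ _ h1, List.getD_eq_getElem _ _ h2]
    exact List.isChain_iff_getElem.1 h i (by omega)

lemma mem_SS_iff : ∀ n x, x ∈ SS n ↔ x.length = n ∧ x.Chain' NotBoth := by
  have key : ∀ n, (∀ x, x ∈ SS n ↔ x.length = n ∧ x.Chain' NotBoth) ∧
      (∀ x, x ∈ SS (n+1) ↔ x.length = n+1 ∧ x.Chain' NotBoth) := by
    intro n
    induction n with
    | zero =>
      constructor
      · intro x
        constructor
        · intro hx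
          have : x = [] := by simpa [SS] using hx
          subst this; simp [List.Chain']
        · rintro ⟨hl, -⟩
          rw [List.length_eq_zero_iff] at hl
          subst hl; simp [SS]
      · intro x
        constructor
        · intro hx
          have : x = [false] ∨ x = [true] := by simpa [SS] using hx
          rcases this with rfl | rfl <;> simp [List.Chain']
        · rintro ⟨hl, -⟩
          rw [List.length_eq_one_iff] at hl
          obtain ⟨a, rfl⟩ := hl
          cases a <;> simp [SS]
    | succ n ih =>
      refine ⟨ih.2, fun x => ?_⟩
      show x ∈ (SS (n+1)).image (List.cons false) ∪
          ((SS n).image (fun l => true :: false :: l)) ↔ _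
      constructor
      · intro hx
        rw [Finset.mem_union] at hx
        rcases hx with hx | hx <;> simp only [Finset.mem_image] at hx
        · obtain ⟨u, hu, rfl⟩ := hx
          obtain ⟨h1, h2⟩ := (ih.2 u).1 hu
          refine ⟨by simp [h1], ?_⟩
          simp only [List.Chain']; rw [List.isChain_cons]
          exact ⟨fun b _ => by simp [NotBoth], h2⟩
        · obtain ⟨u, hu, rfl⟩ := hx
          obtain ⟨h1, h2⟩ := (ih.1 u).1 hu
          refine ⟨by simp [h1], ?_⟩
          simp only [List.Chain']; rw [List.isChain_cons, List.isChain_cons]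
          refine ⟨fun b hb => ?_, fun b hb => by simp [NotBoth], h2⟩
          simp at hb; simp [hb, NotBoth]
      · rintro ⟨hl, hc⟩
        match x with
        | a :: b :: t =>
          rw [Finset.mem_union]
          have hlt : t.length = n := by simpa using hl
          simp only [List.Chain'] at hc; rw [List.isChain_cons_cons] at hc
          cases a with
          | false =>
            left
            rw [Finset.mem_image]
            exact ⟨b :: t, (ih.2 _).2 ⟨by simpa using hl, hc.2⟩, rfl⟩
          | true =>
            have hb : b = false := by
              cases b
              · rfl
              · exact absurd ⟨rfl, rfl⟩ hc.1
            subst hb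
            right
            rw [Finset.mem_image]
            refine ⟨t, (ih.1 _).2 ⟨hlt, ?_⟩, rfl⟩
            exact (List.isChain_cons.1 hc.2).2
  exact fun n => (key n).1

lemma pointwise_count : ∀ (x y : List Bool), x.length = y.length →
    (∀ i, i < x.length → y.getD i false = true → x.getD i false = true) →
    x = y ∨ y.count true < x.count true := by
  intro x
  induction x with
  | nil =>
    intro y hl _
    left
    exact (List.length_eq_zero_iff.1 hl.symm).symm
  | cons a x ih =>
    intro y hl hp
    match y with
    | b :: t =>
      have hl' : x.length = t.length := by simpa using hl
      have hp' : ∀ i, i < x.length → t.getD i false = true → x.getD i false = true := by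
        intro i hi h
        have := hp (i+1) (by simp; omega)
        simpa using this h
      have h0 : b = true → a = true := by
        intro hb
        simpa [hb] using hp 0 (by simp)
      have hcx : (a :: x).count true = x.count true + (if a = true then 1 else 0) := by
        simp [List.count_cons]
      have hct : (b :: t).count true = t.count true + (if b = true then 1 else 0) := by
        simp [List.count_cons]
      rcases ih t hl' hp' with rfl | hlt
      · by_cases hab : a = b
        · left; rw [hab]
        · right
          cases b
          · cases a
            · exact absurd rfl hab
            · rw [hcx, hct]; simp
          · exact absurd (h0 rfl) (by simpa using hab)
      · right
        rw [hcx, hct]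
        cases b
        · simp; omega
        · rw [h0 rfl]; simp; omega

lemma exists_flip {n : ℕ} (x y : List Bool) (hx : x.length = n) (hy : y.length = n)
    (hc : x.count true = y.count true) (hne : x ≠ y) :
    ∃ i, i < n ∧ x.getD i false = false ∧ y.getD i false = true := by
  by_contra h
  push_neg at h
  have hp : ∀ i, i < x.length → y.getD i false = true → x.getD i false = true := by
    intro i hi hyi
    have := h i (by omega) 
    cases hxi : x.getD i false
    · exact absurd hyi (this hxi)
    · rfl
  rcases pointwise_count x y (by omega) hp with rfl | hlt
  · exact hne rfl
  · omega

/-- The defining set for `omegaS`. -/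
def omegaSet (n : ℕ) : Set ℕ :=
  {k : ℕ | ∃ B : Set (List Bool),
    (∀ x ∈ B, NoConsecOnes n x) ∧
    (∀ x ∈ B, ∀ y ∈ B, x ≠ y →
      (∃ i, i < n ∧ x.getD i false = false ∧ y.getD i false = true) ∧
      (∃ j, j < n ∧ x.getD j false = true ∧ y.getD j false = false)) ∧
    B.ncard = k}

lemma omegaSet_bddAbove (n : ℕ) : ∀ k ∈ omegaSet n, k ≤ Nat.fib (n+2) := by
  rintro k ⟨B, hB, -, rfl⟩
  have hsub : B ⊆ ↑(SS n) := by
    intro x hx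
    rw [Finset.mem_coe, mem_SS_iff]
    exact (noConsecOnes_iff n x).1 (hB x hx)
  calc B.ncard ≤ (↑(SS n) : Set (List Bool)).ncard :=
        Set.ncard_le_ncard hsub (SS n).finite_toSet
    _ = (SS n).card := Set.ncard_coe_finset _
    _ = Nat.fib (n+2) := SS_card n

noncomputable def omegaS' (n : ℕ) : ℕ := sSup (omegaSet n)

lemma omegaS_le (n : ℕ) : omegaS' n ≤ Nat.fib (n+2) :=
  csSup_le ⟨0, ∅, by simp, by simp, by simp⟩ (omegaSet_bddAbove n)

lemma le_omegaS (n : ℕ) : Nat.fib (n+2) / (n+1) ≤ omegaS' n := by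
  have hmaps : ∀ x ∈ SS n, x.count true ∈ Finset.range (n+1) := by
    intro x hx
    rw [Finset.mem_range]
    have := ((mem_SS_iff n x).1 hx).1
    have := List.count_le_length (l := x) (a := true)
    omega
  obtain ⟨k, -, hcard⟩ := Finset.exists_le_card_fiber_of_mul_le_card_of_maps_to
    hmaps ⟨0, by simp⟩
    (by rw [Finset.card_range, SS_card, mul_comm]; exact Nat.div_mul_le_self _ _)
  set F := (SS n).filter (fun x => x.count true = k) with hF
  refine le_trans hcard (le_csSup ⟨Nat.fib (n+2), omegaSet_bddAbove n⟩ ?_)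
  refine ⟨↑F, ?_, ?_, Set.ncard_coe_finset _⟩
  · intro x hx
    rw [Finset.mem_coe, hF, Finset.mem_filter] at hx
    exact (noConsecOnes_iff n x).2 ((mem_SS_iff n x).1 hx.1)
  · intro x hx y hy hne
    rw [Finset.mem_coe, hF, Finset.mem_filter, mem_SS_iff] at hx hy
    have hxl : x.length = n := hx.1.1
    have hyl : y.length = n := hy.1.1
    have hc : x.count true = y.count true := by rw [hx.2, hy.2]
    refine ⟨exists_flip x y hxl hyl hc hne, ?_⟩
    obtain ⟨j, hj, h1, h2⟩ := exists_flip y x hyl hxl hc.symm (Ne.symm hne)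
    exact ⟨j, hj, h2, h1⟩

lemma nat_le_fib (n : ℕ) : n + 1 ≤ Nat.fib (n+2) := by
  induction n with
  | zero => simp
  | succ n ih =>
    show n + 2 ≤ Nat.fib (n+3)
    have h : Nat.fib (n+3) = Nat.fib (n+1) + Nat.fib (n+2) := Nat.fib_add_two
    have : 0 < Nat.fib (n+1) := Nat.fib_pos.2 (by omega)
    omega

lemma one_le_omegaS (n : ℕ) : 1 ≤ omegaS' n := by
  have h := le_omegaS n
  have := nat_le_fib n
  have : 1 ≤ Nat.fib (n+2) / (n+1) := (Nat.one_le_div_iff (by omega)).2 (by omega)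
  omega

lemma fib_bounds : ∀ n : ℕ, Real.goldenRatio ^ n ≤ (Nat.fib (n+2) : ℝ) ∧
    (Nat.fib (n+2) : ℝ) ≤ Real.goldenRatio ^ (n+1) := by
  have h5 : Real.sqrt 5 ^ 2 = 5 := Real.sq_sqrt (by norm_num)
  have h5n : (0:ℝ) ≤ Real.sqrt 5 := Real.sqrt_nonneg 5
  have key : ∀ n : ℕ, (Real.goldenRatio ^ n ≤ (Nat.fib (n+2) : ℝ) ∧
      (Nat.fib (n+2) : ℝ) ≤ Real.goldenRatio ^ (n+1)) ∧
      (Real.goldenRatio ^ (n+1) ≤ (Nat.fib (n+3) : ℝ) ∧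
      (Nat.fib (n+3) : ℝ) ≤ Real.goldenRatio ^ (n+2)) := by
    intro n
    induction n with
    | zero =>
      refine ⟨⟨?_, ?_⟩, ?_, ?_⟩ <;> norm_num [Real.goldenRatio] <;> nlinarith
    | succ n ih =>
      refine ⟨ih.2, ?_, ?_⟩
      · have h4 : (Nat.fib (n+4) : ℝ) = Nat.fib (n+2) + Nat.fib (n+3) := by
          have : Nat.fib (n+4) = Nat.fib (n+2) + Nat.fib (n+3) := Nat.fib_add_two
          exact_mod_cast this
        have hsq : Real.goldenRatio ^ (n+2) = Real.goldenRatio ^ (n+1) + Real.goldenRatio ^ n := by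
          have : Real.goldenRatio ^ (n+2) = Real.goldenRatio ^ n * Real.goldenRatio ^ 2 := by ring
          rw [this, Real.goldenRatio_sq]; ring
        show Real.goldenRatio ^ (n+2) ≤ (Nat.fib (n+4) : ℝ)
        rw [h4, hsq]
        have := ih.1.1
        have := ih.2.1
        linarith
      · have h4 : (Nat.fib (n+4) : ℝ) = Nat.fib (n+2) + Nat.fib (n+3) := by
          have : Nat.fib (n+4) = Nat.fib (n+2) + Nat.fib (n+3) := Nat.fib_add_two
          exact_mod_cast this
        have hsq : Real.goldenRatio ^ (n+3) = Real.goldenRatio ^ (n+2) + Real.goldenRatio ^ (n+1) := by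
          have : Real.goldenRatio ^ (n+3) = Real.goldenRatio ^ (n+1) * Real.goldenRatio ^ 2 := by ring
          rw [this, Real.goldenRatio_sq]; ring
        show (Nat.fib (n+4) : ℝ) ≤ Real.goldenRatio ^ (n+3)
        rw [h4, hsq]
        have := ih.1.2
        have := ih.2.2
        linarith
  exact fun n => (key n).1

lemma omegaS_real_ub (n : ℕ) : (omegaS' n : ℝ) ≤ Real.goldenRatio ^ (n+1) :=
  le_trans (by exact_mod_cast omegaS_le n) (fib_bounds n).2

lemma omegaS_real_lb (n : ℕ) :
    Real.goldenRatio ^ n / (2 * ((n:ℝ) + 1)) ≤ (omegaS' n : ℝ) := by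
  set q := Nat.fib (n+2) / (n+1) with hq
  have h1 : 1 ≤ q := by
    have := nat_le_fib n
    exact (Nat.one_le_div_iff (by omega)).2 (by omega)
  have hd := Nat.div_add_mod (Nat.fib (n+2)) (n+1)
  have hm : Nat.fib (n+2) % (n+1) < n+1 := Nat.mod_lt _ (by omega)
  rw [← hq] at hd
  have hnat : Nat.fib (n+2) ≤ 2 * q * (n+1) := by nlinarith
  have hreal : (Nat.fib (n+2) : ℝ) ≤ 2 * (q:ℝ) * ((n:ℝ)+1) := by exact_mod_cast hnat
  have hfib : Real.goldenRatio ^ n ≤ (Nat.fib (n+2) : ℝ) := (fib_bounds n).1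
  have hqo : (q : ℝ) ≤ (omegaS' n : ℝ) := by exact_mod_cast le_omegaS n
  rw [div_le_iff₀ (by positivity)]
  nlinarith

lemma tendsto_logb_lin_div : Tendsto (fun n : ℕ => Real.logb 2 (2 * ((n:ℝ)+1)) / n)
    atTop (𝓝 0) := by
  have hlog : Tendsto (fun n : ℕ => Real.log (2 * ((n:ℝ)+1)) / n) atTop (𝓝 0) := by
    have htend : Tendsto (fun n : ℕ => 2 * ((n:ℝ)+1)) atTop atTop := by
      apply Tendsto.const_mul_atTop (by norm_num)
      exact tendsto_atTop_add_const_right _ _ tendsto_natCast_atTop_atTop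
    have h1 : (fun n : ℕ => Real.log (2 * ((n:ℝ)+1))) =o[atTop]
        (fun n : ℕ => 2 * ((n:ℝ)+1)) := by
      simpa [Function.comp_def] using Real.isLittleO_log_id_atTop.comp_tendsto htend
    have h2 : (fun n : ℕ => 2 * ((n:ℝ)+1)) =O[atTop] (fun n : ℕ => (n:ℝ)) := by
      apply Asymptotics.IsBigO.of_bound 4
      filter_upwards [eventually_ge_atTop 1] with n hn
      have hn1 : (1:ℝ) ≤ (n:ℝ) := by exact_mod_cast hn
      rw [Real.norm_eq_abs, Real.norm_eq_abs, abs_of_nonneg (by positivity),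
        abs_of_nonneg (by positivity)]
      linarith
    exact (h1.trans_isBigO h2).tendsto_div_nhds_zero
  have : (fun n : ℕ => Real.logb 2 (2 * ((n:ℝ)+1)) / n)
      = fun n : ℕ => (Real.log (2 * ((n:ℝ)+1)) / n) * (Real.log 2)⁻¹ := by
    funext n
    rw [Real.logb]
    ring
  rw [this]
  simpa using hlog.mul_const (Real.log 2)⁻¹

lemma tendsto_main : Tendsto (fun n : ℕ => Real.logb 2 (omegaS' n) / n) atTop
    (𝓝 (Real.logb 2 Real.goldenRatio)) := by
  have hb2 : (1:ℝ) < 2 := one_lt_two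
  -- lower sequence
  have hL : Tendsto (fun n : ℕ => Real.logb 2 Real.goldenRatio
      - Real.logb 2 (2 * ((n:ℝ)+1)) / n) atTop (𝓝 (Real.logb 2 Real.goldenRatio)) := by
    simpa using tendsto_const_nhds.sub tendsto_logb_lin_div
  -- upper sequence
  have hU : Tendsto (fun n : ℕ => (((n:ℝ)+1) / n) * Real.logb 2 Real.goldenRatio) atTop
      (𝓝 (Real.logb 2 Real.goldenRatio)) := by
    have h1 : Tendsto (fun n : ℕ => ((n:ℝ)+1) / n) atTop (𝓝 1) := by
      have : Tendsto (fun n : ℕ => 1 + 1/(n:ℝ)) atTop (𝓝 (1 + 0)) :=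
        tendsto_const_nhds.add tendsto_one_div_atTop_nhds_zero_nat
      rw [show (1:ℝ) = 1 + 0 by norm_num]
      apply this.congr'
      filter_upwards [eventually_ge_atTop 1] with n hn
      have : (n:ℝ) ≠ 0 := by positivity
      field_simp; ring
    simpa using h1.mul_const (Real.logb 2 Real.goldenRatio)
  apply tendsto_of_tendsto_of_tendsto_of_le_of_le' hL hU
  · -- lower ≤ a n eventually
    filter_upwards [eventually_ge_atTop 1] with n hn
    have hnR : (0:ℝ) < n := by exact_mod_cast hn
    have hpos : (0:ℝ) < Real.goldenRatio ^ n / (2 * ((n:ℝ)+1)) := by positivity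
    have hmono := Real.logb_le_logb_of_le hb2 hpos (omegaS_real_lb n)
    rw [Real.logb_div (by positivity) (by positivity), Real.logb_pow] at hmono
    have hdiv : ((n:ℝ) * Real.logb 2 Real.goldenRatio - Real.logb 2 (2 * ((n:ℝ)+1))) / n
        ≤ Real.logb 2 (omegaS' n) / n := by gcongr
    have heq : Real.logb 2 Real.goldenRatio - Real.logb 2 (2 * ((n:ℝ)+1)) / n
        = ((n:ℝ) * Real.logb 2 Real.goldenRatio - Real.logb 2 (2 * ((n:ℝ)+1))) / n := by
      field_simp
    rw [heq]
    exact hdiv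
  · -- a n ≤ upper eventually
    filter_upwards [eventually_ge_atTop 1] with n hn
    have hnR : (0:ℝ) < n := by exact_mod_cast hn
    have hpos : (0:ℝ) < (omegaS' n : ℝ) := by exact_mod_cast one_le_omegaS n
    have hmono := Real.logb_le_logb_of_le hb2 hpos (omegaS_real_ub n)
    rw [Real.logb_pow] at hmono
    have hdiv : Real.logb 2 (omegaS' n) / n
        ≤ (((n:ℝ)+1) * Real.logb 2 Real.goldenRatio) / n := by
      gcongr
      exact_mod_cast hmono
    rw [mul_div_right_comm] at hdiv
    exact hdiv

theorem stmt16 :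
    Filter.limsup (fun n : ℕ => Real.logb 2 (omegaS n) / n) atTop =
      Real.logb 2 ((1 + Real.sqrt 5) / 2) := by
  have he : omegaS = omegaS' := rfl
  rw [he]
  exact tendsto_main.limsup_eq
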